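/- Let W be an affine Weyl group realized on alcoves, and for x,y ∈ W let H(A,B) denote the set of hyperplanes separating alcoves A and B, and H_{x,y} = H(A_0, yA_0) ∩ H(yA_0, xyA_0). If x < xs and y < sy for some s ∈ S, then H_{xs,y} = H_{x,sy}. -/

import Mathlib

/-! Geometric realization of an irreducible affine Weyl group acting on the set of
alcoves of the affine hyperplane arrangement `F = {H_{α,n}}` in a Euclidean space. -/

/-- The underlying data of the geometric realization: a Euclidean space `V = ℝ^r`,
a (finite) set `Phi` of positive roots with coroot map, a Coxeter system `(W,S)`,
an action of `W` on `V` realizing the action on alcoves, together with, for each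
`s ∈ S` and `w ∈ W`, the wall `wall s w` crossed between the alcoves `wA₀` and `swA₀`,
the orthogonal reflections in the hyperplanes of `F`, a weight function `L` on `W`
and the induced weights `cH` on hyperplanes. -/
structure AlcoveData where
  r : ℕ
  B : Type
  W : Type
  [grp : Group W]
  M : CoxeterMatrix B
  cs : CoxeterSystem M W
  Phi : Finset (EuclideanSpace ℝ (Fin r))
  coroot : EuclideanSpace ℝ (Fin r) → EuclideanSpace ℝ (Fin r)
  act : W →* Equiv.Perm (EuclideanSpace ℝ (Fin r))
  wall : B → W → ({α : EuclideanSpace ℝ (Fin r) // α ∈ Phi} × ℤ)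
  reflPt : ({α : EuclideanSpace ℝ (Fin r) // α ∈ Phi} × ℤ) → Equiv.Perm (EuclideanSpace ℝ (Fin r))
  reflHyp : ({α : EuclideanSpace ℝ (Fin r) // α ∈ Phi} × ℤ) →
    ({α : EuclideanSpace ℝ (Fin r) // α ∈ Phi} × ℤ) → ({α : EuclideanSpace ℝ (Fin r) // α ∈ Phi} × ℤ)
  L : W → ℤ
  cH : ({α : EuclideanSpace ℝ (Fin r) // α ∈ Phi} × ℤ) → ℤ

attribute [instance] AlcoveData.grp

namespace AlcoveData

variable (S : AlcoveData)

/-- The ambient Euclidean space `V`. -/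
abbrev V := EuclideanSpace ℝ (Fin S.r)

/-- The index type for the hyperplanes `H_{α,n} ∈ F`: a positive root (the direction)
together with an integer. -/
abbrev Hyp := ({α : EuclideanSpace ℝ (Fin S.r) // α ∈ S.Phi} × ℤ)

/-- `⟨x, α̌⟩`, the pairing of a point with the coroot of `α`. -/
noncomputable def pair (x α : S.V) : ℝ := inner ℝ x (S.coroot α)

/-- The hyperplane `H_{α,n} = {x ∈ V : ⟨x, α̌⟩ = n}`. -/
def hypSet (H : S.Hyp) : Set S.V := {x | S.pair x H.1.1 = (H.2 : ℝ)}

/-- The fundamental alcove `A₀`. -/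
def A0 : Set S.V := {x | ∀ α ∈ S.Phi, 0 < S.pair x α ∧ S.pair x α < 1}

/-- The alcove `wA₀`. -/
def alcove (w : S.W) : Set S.V := (S.act w) '' S.A0

/-- `H` separates the subsets `A` and `C` of `V`. -/
def Separates (H : S.Hyp) (A C : Set S.V) : Prop :=
  (A ⊆ {x | S.pair x H.1.1 < (H.2 : ℝ)} ∧ C ⊆ {x | (H.2 : ℝ) < S.pair x H.1.1}) ∨
  (C ⊆ {x | S.pair x H.1.1 < (H.2 : ℝ)} ∧ A ⊆ {x | (H.2 : ℝ) < S.pair x H.1.1})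

/-- `H(A,C)`: the set of hyperplanes of `F` separating `A` and `C`. -/
def sep (A C : Set S.V) : Set S.Hyp := {H | S.Separates H A C}

/-- `H_{x,y} = H(A₀, yA₀) ∩ H(yA₀, xyA₀)`. -/
def Hxy (x y : S.W) : Set S.Hyp :=
  S.sep S.A0 (S.alcove y) ∩ S.sep (S.alcove y) (S.alcove (x * y))

/-- `I_{x,y}`: the set of directions of hyperplanes occurring in `H_{x,y}`. -/
def dirs (x y : S.W) : Set {α : EuclideanSpace ℝ (Fin S.r) // α ∈ S.Phi} :=
  (fun H : S.Hyp => H.1) '' S.Hxy x y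

/-- `c_{x,y}(i)`: the maximal weight of a hyperplane of direction `i` in `H_{x,y}`. -/
noncomputable def cdir (x y : S.W) (i : {α : EuclideanSpace ℝ (Fin S.r) // α ∈ S.Phi}) : ℤ :=
  sSup (S.cH '' {H : S.Hyp | H ∈ S.Hxy x y ∧ H.1 = i})

/-- `c_{x,y} = Σ_{i ∈ I_{x,y}} c_{x,y}(i)`. -/
noncomputable def cXY (x y : S.W) : ℤ := ∑ᶠ i ∈ S.dirs x y, S.cdir x y i

end AlcoveData

/-- The geometric realization: the data above subject to the defining geometric
properties (wall-crossing, behaviour of separating sets, reflections, weights). -/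
structure AlcoveSetup extends AlcoveData where
  /-- `wall s w` is the unique hyperplane separating `wA₀` and `swA₀`. -/
  wall_sep : ∀ (s : B) (w : W),
    toAlcoveData.sep (toAlcoveData.alcove w) (toAlcoveData.alcove (cs.simple s * w))
      = {wall s w}
  /-- Separating sets of alcoves compose via symmetric difference. -/
  sep_symmDiff : ∀ a b c : W,
    toAlcoveData.sep (toAlcoveData.alcove a) (toAlcoveData.alcove c)
      = symmDiff (toAlcoveData.sep (toAlcoveData.alcove a) (toAlcoveData.alcove b))
          (toAlcoveData.sep (toAlcoveData.alcove b) (toAlcoveData.alcove c))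
  /-- Crossing a wall in the direction increasing the length adds that wall. -/
  cross_up : ∀ (s : B) (w : W), cs.length (cs.simple s * w) = cs.length w + 1 →
    wall s w ∉ toAlcoveData.sep toAlcoveData.A0 (toAlcoveData.alcove w) ∧
    toAlcoveData.sep toAlcoveData.A0 (toAlcoveData.alcove (cs.simple s * w))
      = insert (wall s w) (toAlcoveData.sep toAlcoveData.A0 (toAlcoveData.alcove w))
  /-- Crossing a wall in the direction decreasing the length removes that wall. -/
  cross_down : ∀ (s : B) (w : W), cs.length (cs.simple s * w) + 1 = cs.length w →
    wall s w ∈ toAlcoveData.sep toAlcoveData.A0 (toAlcoveData.alcove w) ∧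
    toAlcoveData.sep toAlcoveData.A0 (toAlcoveData.alcove (cs.simple s * w))
      = toAlcoveData.sep toAlcoveData.A0 (toAlcoveData.alcove w) \ {wall s w}
  /-- Only finitely many hyperplanes separate two alcoves. -/
  sep_finite : ∀ w : W, (toAlcoveData.sep toAlcoveData.A0 (toAlcoveData.alcove w)).Finite
  /-- `reflPt H` is the orthogonal reflection with fixed point set the hyperplane `H`. -/
  reflPt_fix : ∀ (H : toAlcoveData.Hyp) (x : toAlcoveData.V),
    x ∈ toAlcoveData.hypSet H → reflPt H x = x
  reflPt_invol : ∀ (H : toAlcoveData.Hyp) (x : toAlcoveData.V), reflPt H (reflPt H x) = x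
  reflPt_pair : ∀ (H : toAlcoveData.Hyp) (x : toAlcoveData.V) (α : EuclideanSpace ℝ (Fin r)),
    α ∈ Phi → ∃ β ∈ Phi, |toAlcoveData.pair (reflPt H x) β| = |toAlcoveData.pair x α|
  /-- The reflection in `H` maps each hyperplane `K ∈ F` onto the hyperplane `reflHyp H K`. -/
  reflHyp_spec : ∀ H K : toAlcoveData.Hyp,
    (reflPt H) '' toAlcoveData.hypSet K = toAlcoveData.hypSet (reflHyp H K)
  /-- The reflection `σ_s` in the wall separating `wA₀` and `swA₀` commutes with the
  left action of `W`: it maps `uwA₀` to `uswA₀` for every `u`. -/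
  reflPt_wall_alcove : ∀ (s : B) (w u : W),
    (reflPt (wall s w)) '' toAlcoveData.alcove (u * w)
      = toAlcoveData.alcove (u * cs.simple s * w)
  /-- `L` is a positive weight function on `W`. -/
  L_add : ∀ x y : W, cs.length (x * y) = cs.length x + cs.length y → L (x * y) = L x + L y
  L_pos : ∀ w : W, w ≠ 1 → 0 < L w
  /-- The weight of the wall separating `wA₀` and `swA₀` is `L(s)`. -/
  cH_wall : ∀ (s : B) (w : W), cH (wall s w) = L (cs.simple s)


namespace AlcoveAux

open AlcoveData

variable (S : AlcoveSetup)

/-- `N w = H(A₀, wA₀)`. -/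
def N (w : S.W) : Set S.toAlcoveData.Hyp :=
  S.toAlcoveData.sep S.toAlcoveData.A0 (S.toAlcoveData.alcove w)

lemma alcove_one : S.toAlcoveData.alcove 1 = S.toAlcoveData.A0 := by
  unfold AlcoveData.alcove
  rw [map_one]
  simp

lemma sep_comm (A C : Set S.toAlcoveData.V) :
    S.toAlcoveData.sep A C = S.toAlcoveData.sep C A := by
  ext H
  exact or_comm

lemma sep_eq_symmDiff (b c : S.W) :
    S.toAlcoveData.sep (S.toAlcoveData.alcove b) (S.toAlcoveData.alcove c)
      = symmDiff (N S b) (N S c) := by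
  have h := S.sep_symmDiff b 1 c
  rw [alcove_one] at h
  rw [h]
  unfold N
  rw [sep_comm]

lemma A0_nonempty (s : S.B) (y : S.W)
    (hy : S.cs.length (S.cs.simple s * y) = S.cs.length y + 1) :
    S.toAlcoveData.A0.Nonempty := by
  by_contra h
  rw [Set.not_nonempty_iff_eq_empty] at h
  have ha : S.toAlcoveData.alcove y = ∅ := by
    unfold AlcoveData.alcove
    rw [h, Set.image_empty]
  exact (S.cross_up s y hy).1 (Or.inl ⟨by rw [h]; exact Set.empty_subset _,
    by rw [ha]; exact Set.empty_subset _⟩)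

lemma sep_self (hA : S.toAlcoveData.A0.Nonempty) :
    S.toAlcoveData.sep S.toAlcoveData.A0 S.toAlcoveData.A0 = ∅ := by
  obtain ⟨a, ha⟩ := hA
  ext H
  simp only [Set.mem_empty_iff_false, iff_false]
  rintro (⟨h1, h2⟩ | ⟨h1, h2⟩) <;>
  · have := h1 ha
    have := h2 ha
    simp only [Set.mem_setOf_eq] at *
    linarith

lemma ncard_N (hA : S.toAlcoveData.A0.Nonempty) :
    ∀ (n : ℕ) (w : S.W), S.cs.length w = n → (N S w).ncard = n := by
  intro n
  induction n with
  | zero =>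
    intro w hw
    have hw1 : w = 1 := S.cs.length_eq_zero_iff.mp hw
    subst hw1
    unfold N
    rw [alcove_one, sep_self S hA, Set.ncard_empty]
  | succ m ih =>
    intro w hw
    have hw1 : w ≠ 1 := by
      intro h
      subst h
      rw [S.cs.length_one] at hw
      omega
    obtain ⟨t, ht⟩ := S.cs.exists_leftDescent_of_ne_one hw1
    have hd : S.cs.length (S.cs.simple t * w) < S.cs.length w := ht
    set w' := S.cs.simple t * w with hw'def
    have htw : S.cs.simple t * w' = w := by
      rw [hw'def]; exact S.cs.simple_mul_simple_cancel_left t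
    have hlw' : S.cs.length w' + 1 = S.cs.length w := by
      rcases S.cs.length_simple_mul w t with h | h <;> rw [← hw'def] at h <;> omega
    have hup : S.cs.length (S.cs.simple t * w') = S.cs.length w' + 1 := by
      rw [htw]; omega
    obtain ⟨hnm, hins⟩ := S.cross_up t w' hup
    rw [htw] at hins
    have hthis : (N S w) = insert (S.wall t w') (N S w') := hins
    have hnm' : S.wall t w' ∉ N S w' := hnm
    have hfin : (N S w').Finite := S.sep_finite w'
    rw [hthis, Set.ncard_insert_of_notMem hnm' hfin, ih w' (by omega)]

lemma eq_of_alcove_forall (hA : S.toAlcoveData.A0.Nonempty) {a b : S.W}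
    (h : ∀ u : S.W, S.toAlcoveData.alcove (u * a) = S.toAlcoveData.alcove (u * b)) :
    a = b := by
  have h1 := h a⁻¹
  rw [inv_mul_cancel] at h1
  have h2 : (N S (a⁻¹ * b)).ncard = 0 := by
    unfold N
    rw [← h1, alcove_one, sep_self S hA, Set.ncard_empty]
  have h3 : S.cs.length (a⁻¹ * b) = 0 := by
    have := ncard_N S hA (S.cs.length (a⁻¹ * b)) (a⁻¹ * b) rfl
    omega
  exact inv_mul_eq_one.mp (S.cs.length_eq_zero_iff.mp h3)

lemma key (hA : S.toAlcoveData.A0.Nonempty) (s : S.B) (y : S.W)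
    (hy : S.cs.length (S.cs.simple s * y) = S.cs.length y + 1) :
    ∀ (n : ℕ) (x : S.W), S.cs.length x = n →
      S.cs.length (x * S.cs.simple s) = n + 1 →
      S.wall s y ∈ N S (x * (S.cs.simple s * y)) ∧ S.wall s y ∉ N S (x * y) := by
  intro n
  induction n using Nat.strong_induction_on with
  | _ n ih =>
    intro x hxn hxs
    rcases eq_or_ne x 1 with rfl | hx1
    · obtain ⟨h1, h2⟩ := S.cross_up s y hy
      simp only [one_mul]
      refine ⟨?_, h1⟩
      show S.wall s y ∈ S.toAlcoveData.sep S.toAlcoveData.A0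
        (S.toAlcoveData.alcove (S.cs.simple s * y))
      rw [h2]
      exact Set.mem_insert _ _
    · obtain ⟨t, ht⟩ := S.cs.exists_leftDescent_of_ne_one hx1
      have hd : S.cs.length (S.cs.simple t * x) < S.cs.length x := ht
      set x' := S.cs.simple t * x with hx'def
      have htx : S.cs.simple t * x' = x := by
        rw [hx'def]; exact S.cs.simple_mul_simple_cancel_left t
      have hlx' : S.cs.length x' + 1 = n := by
        rcases S.cs.length_simple_mul x t with h | h <;> rw [← hx'def] at h <;> omega
      have hx's : S.cs.length (x' * S.cs.simple s) = S.cs.length x' + 1 := by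
        rcases S.cs.length_mul_simple x' s with h | h
        · exact h
        · exfalso
          have hxs2 : x * S.cs.simple s = S.cs.simple t * (x' * S.cs.simple s) := by
            rw [← htx, mul_assoc]
          rcases S.cs.length_simple_mul (x' * S.cs.simple s) t with h2 | h2 <;>
            rw [← hxs2] at h2 <;> omega
      obtain ⟨IH1, IH2⟩ := ih (S.cs.length x') (by omega) x' rfl hx's
      -- the common contradiction: if `wall t v = wall s y` for the relevant `v`,
      -- then `x * s = x'`, contradicting lengths.
      have hcontr : x * S.cs.simple s ≠ x' := by
        intro h
        rw [h] at hxs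
        omega
      constructor
      · -- wall s y ∈ N (x * (s * y))
        have hxw : x * (S.cs.simple s * y)
            = S.cs.simple t * (x' * (S.cs.simple s * y)) := by
          rw [← htx, mul_assoc]
        rcases S.cs.length_simple_mul (x' * (S.cs.simple s * y)) t with hud | hud
        · obtain ⟨_, h2⟩ := S.cross_up t _ hud
          show S.wall s y ∈ S.toAlcoveData.sep S.toAlcoveData.A0
            (S.toAlcoveData.alcove (x * (S.cs.simple s * y)))
          rw [hxw, h2]
          exact Set.mem_insert_iff.mpr (Or.inr IH1)
        · obtain ⟨_, h2⟩ := S.cross_down t _ hud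
          show S.wall s y ∈ S.toAlcoveData.sep S.toAlcoveData.A0
            (S.toAlcoveData.alcove (x * (S.cs.simple s * y)))
          rw [hxw, h2]
          refine ⟨IH1, ?_⟩
          intro hmem
          have hw : S.wall t (x' * (S.cs.simple s * y)) = S.wall s y := by
            have := hmem
            simp only [Set.mem_singleton_iff] at this
            exact this.symm
          -- derive `x * s = x'`
          apply hcontr
          have hall : ∀ u : S.W,
              S.toAlcoveData.alcove (u * (S.cs.simple t * (x' * (S.cs.simple s * y))))
                = S.toAlcoveData.alcove (u * (x' * y)) := by
            intro u
            have e1 := S.reflPt_wall_alcove t (x' * (S.cs.simple s * y)) u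
            have e2 := S.reflPt_wall_alcove s y (u * (x' * S.cs.simple s))
            rw [hw] at e1
            have harg : u * (x' * S.cs.simple s) * y
                = u * (x' * (S.cs.simple s * y)) := by
              simp only [mul_assoc]
            rw [harg] at e2
            have harg2 : u * (x' * S.cs.simple s) * S.cs.simple s * y
                = u * (x' * y) := by
              simp only [mul_assoc, S.cs.simple_mul_simple_cancel_left]
            rw [harg2] at e2
            have harg3 : u * S.cs.simple t * (x' * (S.cs.simple s * y))
                = u * (S.cs.simple t * (x' * (S.cs.simple s * y))) := by
              simp only [mul_assoc]
            rw [harg3] at e1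
            rw [← e1, e2]
          have hab := eq_of_alcove_forall S hA hall
          -- hab : t * (x' * (s * y)) = x' * y
          have := congrArg (fun z => z * y⁻¹) hab
          simp only [mul_assoc, mul_inv_cancel, mul_one] at this
          -- this : t * (x' * s) = x'
          rw [← htx, mul_assoc]
          exact this
      · -- wall s y ∉ N (x * y)
        have hxw : x * y = S.cs.simple t * (x' * y) := by
          rw [← htx, mul_assoc]
        rcases S.cs.length_simple_mul (x' * y) t with hud | hud
        · obtain ⟨_, h2⟩ := S.cross_up t _ hud
          show S.wall s y ∉ S.toAlcoveData.sep S.toAlcoveData.A0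
            (S.toAlcoveData.alcove (x * y))
          rw [hxw, h2]
          intro hmem
          rcases Set.mem_insert_iff.mp hmem with heq | hmem2
          · -- wall s y = wall t (x' * y): contradiction
            apply hcontr
            have hw : S.wall t (x' * y) = S.wall s y := heq.symm
            have hall : ∀ u : S.W,
                S.toAlcoveData.alcove (u * (S.cs.simple t * (x' * y)))
                  = S.toAlcoveData.alcove (u * (x' * (S.cs.simple s * y))) := by
              intro u
              have e1 := S.reflPt_wall_alcove t (x' * y) u
              have e2 := S.reflPt_wall_alcove s y (u * x')
              rw [hw] at e1
              have harg : u * x' * y = u * (x' * y) := by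
                simp only [mul_assoc]
              rw [harg] at e2
              have harg2 : u * x' * S.cs.simple s * y
                  = u * (x' * (S.cs.simple s * y)) := by
                simp only [mul_assoc]
              rw [harg2] at e2
              have harg3 : u * S.cs.simple t * (x' * y)
                  = u * (S.cs.simple t * (x' * y)) := by
                simp only [mul_assoc]
              rw [harg3] at e1
              rw [← e1, e2]
            have hab := eq_of_alcove_forall S hA hall
            -- hab : t * (x' * y) = x' * (s * y)
            have h2' := congrArg (fun z => z * y⁻¹) hab
            simp only [mul_assoc, mul_inv_cancel, mul_one] at h2'
            -- h2' : t * x' = x' * s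
            rw [← htx, h2']
            exact S.cs.simple_mul_simple_cancel_right s
          · exact IH2 hmem2
        · obtain ⟨_, h2⟩ := S.cross_down t _ hud
          show S.wall s y ∉ S.toAlcoveData.sep S.toAlcoveData.A0
            (S.toAlcoveData.alcove (x * y))
          rw [hxw, h2]
          intro hmem
          exact IH2 hmem.1

end AlcoveAux

/-- If `x < xs` and `y < sy` then `H_{xs,y} = H_{x,sy}`. -/
theorem Hxy_xs_eq_Hxy_sy (S : AlcoveSetup) (x y : S.W) (s : S.B)
    (hx : S.cs.length (x * S.cs.simple s) = S.cs.length x + 1)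
    (hy : S.cs.length (S.cs.simple s * y) = S.cs.length y + 1) :
    S.toAlcoveData.Hxy (x * S.cs.simple s) y = S.toAlcoveData.Hxy x (S.cs.simple s * y) := by
  have hA := AlcoveAux.A0_nonempty S s y hy
  have hkey := (AlcoveAux.key S hA s y hy (S.cs.length x) x rfl hx).1
  have hid : ∀ (A B : Set S.toAlcoveData.Hyp), A ∩ (symmDiff A B) = A \ B := by
    intro A B
    ext z
    simp only [Set.mem_inter_iff, Set.mem_symmDiff, Set.mem_diff]
    tauto
  unfold AlcoveData.Hxy
  rw [show x * S.cs.simple s * y = x * (S.cs.simple s * y) from mul_assoc x _ y]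
  rw [AlcoveAux.sep_eq_symmDiff, AlcoveAux.sep_eq_symmDiff]
  show AlcoveAux.N S y ∩ _ = AlcoveAux.N S (S.cs.simple s * y) ∩ _
  rw [hid, hid]
  have hins : AlcoveAux.N S (S.cs.simple s * y)
      = insert (S.wall s y) (AlcoveAux.N S y) := (S.cross_up s y hy).2
  rw [hins]
  ext z
  simp only [Set.mem_diff, Set.mem_insert_iff]
  constructor
  · rintro ⟨h1, h2⟩
    exact ⟨Or.inr h1, h2⟩
  · rintro ⟨h1, h2⟩
    rcases h1 with rfl | h1
    · exact absurd hkey h2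
    · exact ⟨h1, h2⟩
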